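/- arXiv:1106.2819 — 4 statements merged into one kernel-verified Lean document; each statement's English description precedes it below -/
import Mathlib

section
/- A vector w = (w1, w2, w3) ∈ ℝ³ satisfies min_{t ∈ [0,Ts)} [w1·φ1(t) + w2·φ2(t) + w3·φ3(t)] ≥ 0 if and only if w1 ≥ √(2(w2² + w3²)). In other words, the admissible region of nonnegative signals is the cone Υ = { w ∈ ℝ³ : w1 ≥ √(2(w2² + w3²)) }. -/
open Real Set

theorem nonneg_signal_iff_cone (Ts : ℝ) (hTs : 0 < Ts) (w1 w2 w3 : ℝ) :
    (∀ t ∈ Set.Ico (0:ℝ) Ts,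
        0 ≤ w1 * (1 / Real.sqrt Ts)
          + w2 * (Real.sqrt (2 / Ts) * Real.cos (2 * Real.pi * t / Ts))
          + w3 * (Real.sqrt (2 / Ts) * Real.sin (2 * Real.pi * t / Ts)))
      ↔ Real.sqrt (2 * (w2 ^ 2 + w3 ^ 2)) ≤ w1 := by
  have hsT : 0 < Real.sqrt Ts := Real.sqrt_pos.mpr hTs
  have hs2 : Real.sqrt (2 / Ts) = Real.sqrt 2 / Real.sqrt Ts :=
    Real.sqrt_div (by norm_num) Ts
  set r : ℝ := Real.sqrt (w2 ^ 2 + w3 ^ 2) with hr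
  have hr0 : 0 ≤ r := Real.sqrt_nonneg _
  have hr2 : r ^ 2 = w2 ^ 2 + w3 ^ 2 := Real.sq_sqrt (by positivity)
  have hgoal : Real.sqrt (2 * (w2 ^ 2 + w3 ^ 2)) = Real.sqrt 2 * r := by
    rw [Real.sqrt_mul (by norm_num)]
  have hexpr : ∀ t : ℝ,
      w1 * (1 / Real.sqrt Ts)
        + w2 * (Real.sqrt (2 / Ts) * Real.cos (2 * Real.pi * t / Ts))
        + w3 * (Real.sqrt (2 / Ts) * Real.sin (2 * Real.pi * t / Ts))
      = (w1 + Real.sqrt 2 * (w2 * Real.cos (2 * Real.pi * t / Ts)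
          + w3 * Real.sin (2 * Real.pi * t / Ts))) / Real.sqrt Ts := by
    intro t
    rw [hs2]; field_simp; ring
  have hsqrt2 : (0:ℝ) ≤ Real.sqrt 2 := Real.sqrt_nonneg 2
  constructor
  · intro h
    rw [hgoal]
    by_cases hrz : r = 0
    · have hw2 : w2 = 0 := by
        have := hr2; rw [hrz] at this; nlinarith [sq_nonneg w2, sq_nonneg w3]
      have hw3 : w3 = 0 := by
        have := hr2; rw [hrz] at this; nlinarith [sq_nonneg w2, sq_nonneg w3]
      have h0 := h 0 ⟨le_refl 0, hTs⟩
      rw [hexpr 0, hw2, hw3] at h0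
      simp at h0
      have : 0 ≤ w1 := by
        by_contra hneg
        push_neg at hneg
        have : w1 / Real.sqrt Ts < 0 := div_neg_of_neg_of_pos hneg hsT
        linarith [h0, this]
      rw [hrz]; simpa using this
    · have hrpos : 0 < r := lt_of_le_of_ne hr0 (Ne.symm hrz)
      -- choose angle θ with cos θ = -w2/r, sin θ = -w3/r
      set z : ℂ := ⟨-w2, -w3⟩ with hz
      have hzne : z ≠ 0 := by
        intro hz0
        rw [Complex.ext_iff] at hz0
        simp [hz] at hz0
        apply hrz
        rw [hr, hz0.1, hz0.2]; simp
      have habs : ‖z‖ = r := by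
        rw [Complex.norm_def, Complex.normSq_apply, hr]
        simp [hz]; ring_nf
      have hcos : Real.cos (Complex.arg z) = -w2 / r := by
        rw [Complex.cos_arg hzne, habs]
      have hsin : Real.sin (Complex.arg z) = -w3 / r := by
        rw [Complex.sin_arg, habs]
      set θ : ℝ := if Complex.arg z < 0 then Complex.arg z + 2 * Real.pi
                   else Complex.arg z with hθ
      have hcos' : Real.cos θ = -w2 / r := by
        rw [hθ]; split <;> simp [Real.cos_add_two_pi, hcos]
      have hsin' : Real.sin θ = -w3 / r := by
        rw [hθ]; split <;> simp [Real.sin_add_two_pi, hsin]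
      have harg := Complex.arg_mem_Ioc z
      have hθmem : θ ∈ Set.Ico (0:ℝ) (2 * Real.pi) := by
        obtain ⟨h1, h2⟩ := harg
        have hπ := Real.pi_pos
        rw [hθ]; split <;> constructor <;> [linarith; linarith; linarith; linarith]
      set t : ℝ := Ts * θ / (2 * Real.pi) with ht
      have hπ := Real.pi_pos
      have h2π : (0:ℝ) < 2 * Real.pi := by linarith
      have htmem : t ∈ Set.Ico (0:ℝ) Ts := by
        constructor
        · rw [ht]
          exact div_nonneg (mul_nonneg hTs.le hθmem.1) h2π.le
        · rw [ht, div_lt_iff₀ h2π]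
          exact mul_lt_mul_of_pos_left hθmem.2 hTs
      have hangle : 2 * Real.pi * t / Ts = θ := by
        rw [ht]; field_simp
      have h0 := h t htmem
      rw [hexpr t, hangle, hcos', hsin'] at h0
      have hval : w2 * (-w2 / r) + w3 * (-w3 / r) = -r := by
        field_simp
        nlinarith [hr2]
      rw [hval] at h0
      have : 0 ≤ w1 + Real.sqrt 2 * (-r) := by
        by_contra hneg
        push_neg at hneg
        have : (w1 + Real.sqrt 2 * (-r)) / Real.sqrt Ts < 0 :=
          div_neg_of_neg_of_pos hneg hsT
        linarith
      linarith
  · intro h t ht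
    rw [hexpr t]
    set c := Real.cos (2 * Real.pi * t / Ts)
    set s := Real.sin (2 * Real.pi * t / Ts)
    have hcs : s ^ 2 + c ^ 2 = 1 := Real.sin_sq_add_cos_sq _
    have hbound : -r ≤ w2 * c + w3 * s := by
      nlinarith [sq_nonneg (w2 * s - w3 * c), sq_nonneg (r + w2 * c + w3 * s), hr2, hr0]
    rw [hgoal] at h
    have : 0 ≤ w1 + Real.sqrt 2 * (w2 * c + w3 * s) := by
      have := mul_le_mul_of_nonneg_left hbound hsqrt2
      nlinarith
    positivity
end

section
/- For any constellation Ω = {s_0, …, s_{M−1}} ⊂ Υ of size M ≥ 2 (not all zero), the average-optical-power zero-crossing ratio satisfies (Σᵢ s_{i,1})² / (M·Σᵢ ‖sᵢ‖² − ‖Σᵢ sᵢ‖²) ≥ 2/(3(M−1)), with equality if and only if M−1 points are at the origin and the remaining point lies on the boundary of the cone Υ. -/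
def cone : Set (ℝ × ℝ × ℝ) :=
  {w | Real.sqrt (2 * (w.2.1 ^ 2 + w.2.2 ^ 2)) ≤ w.1}

noncomputable def nsq (w : ℝ × ℝ × ℝ) : ℝ := w.1 ^ 2 + w.2.1 ^ 2 + w.2.2 ^ 2

lemma pair_bound {a1 b1 c1 a2 b2 c2 : ℝ} (ha1 : 0 ≤ a1) (ha2 : 0 ≤ a2)
    (h1 : 2 * (b1 ^ 2 + c1 ^ 2) ≤ a1 ^ 2) (h2 : 2 * (b2 ^ 2 + c2 ^ 2) ≤ a2 ^ 2) :
    2 * ((b1 - b2) ^ 2 + (c1 - c2) ^ 2) ≤ (a1 + a2) ^ 2 := by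
  have hrr : (2 * (b1 * b2 + c1 * c2)) ^ 2 ≤ (a1 * a2) ^ 2 := by
    nlinarith [sq_nonneg (b1 * c2 - b2 * c1),
      mul_le_mul h1 h2 (by positivity) (sq_nonneg a1)]
  have key : 0 ≤ a1 * a2 + 2 * (b1 * b2 + c1 * c2) := by
    nlinarith [mul_nonneg ha1 ha2, hrr]
  nlinarith [key, h1, h2]

lemma sum_expand {n : ℕ} (x y z u v w : Fin n → ℝ) (p q r p2 q2 r2 t : ℝ) :
    ∑ i, (p * x i + q * y i + r * z i + p2 * u i + q2 * v i + r2 * w i + t)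
      = p * (∑ i, x i) + q * (∑ i, y i) + r * (∑ i, z i) + p2 * (∑ i, u i)
        + q2 * (∑ i, v i) + r2 * (∑ i, w i) + n * t := by
  simp [Finset.sum_add_distrib, Finset.mul_sum, Finset.card_univ, mul_comm]

set_option maxHeartbeats 2000000 in
theorem zero_crossing_optical_bound (M : ℕ) (hM : 2 ≤ M)
    (s : Fin M → ℝ × ℝ × ℝ) (hs : ∀ i, s i ∈ cone)
    (hnz : ∃ i, s i ≠ 0)
    (hden : (M : ℝ) * (∑ i, nsq (s i)) - nsq (∑ i, s i) ≠ 0) :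
    2 / (3 * ((M : ℝ) - 1)) ≤
      (∑ i, (s i).1) ^ 2 / ((M : ℝ) * (∑ i, nsq (s i)) - nsq (∑ i, s i)) ∧
    ((∑ i, (s i).1) ^ 2 / ((M : ℝ) * (∑ i, nsq (s i)) - nsq (∑ i, s i)) =
        2 / (3 * ((M : ℝ) - 1)) ↔
      ∃ i, s i ≠ 0 ∧
        (s i).1 = Real.sqrt (2 * ((s i).2.1 ^ 2 + (s i).2.2 ^ 2)) ∧
        ∀ j, j ≠ i → s j = 0) := by
  classical
  have hM2 : (2:ℝ) ≤ (M:ℝ) := by exact_mod_cast hM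
  have h3M : (0:ℝ) < 3 * ((M:ℝ) - 1) := by linarith
  have ha : ∀ i, 0 ≤ (s i).1 := fun i => le_trans (Real.sqrt_nonneg _) (hs i)
  have hq : ∀ i, 2 * ((s i).2.1 ^ 2 + (s i).2.2 ^ 2) ≤ (s i).1 ^ 2 := by
    intro i
    have h := hs i
    have h0 : (0:ℝ) ≤ 2 * ((s i).2.1 ^ 2 + (s i).2.2 ^ 2) := by positivity
    calc 2 * ((s i).2.1 ^ 2 + (s i).2.2 ^ 2)
        = Real.sqrt (2 * ((s i).2.1 ^ 2 + (s i).2.2 ^ 2)) ^ 2 := (Real.sq_sqrt h0).symm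
      _ ≤ (s i).1 ^ 2 := by
          apply pow_le_pow_left₀ (Real.sqrt_nonneg _) h
  have hzero : ∀ i, (s i).1 = 0 → s i = 0 := by
    intro i h0
    have hq' := hq i
    rw [h0] at hq'
    have hb : (s i).2.1 = 0 := by nlinarith [sq_nonneg (s i).2.1, sq_nonneg (s i).2.2]
    have hc : (s i).2.2 = 0 := by nlinarith [sq_nonneg (s i).2.1, sq_nonneg (s i).2.2]
    have hrfl : s i = ((s i).1, (s i).2.1, (s i).2.2) := rfl
    rw [hrfl, h0, hb, hc]; rfl
  set A := ∑ i, (s i).1 with hA_def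
  set D := (M : ℝ) * (∑ i, nsq (s i)) - nsq (∑ i, s i) with hD_def
  set B := ∑ i, (s i).2.1 with hB_def
  set C := ∑ i, (s i).2.2 with hC_def
  set Sa := ∑ i, (s i).1 ^ 2 with hSa_def
  set Sb := ∑ i, (s i).2.1 ^ 2 with hSb_def
  set Sc := ∑ i, (s i).2.2 ^ 2 with hSc_def
  clear_value A D B C Sa Sb Sc
  have hD_val : D = (M:ℝ) * (Sa + Sb + Sc) - (A^2 + B^2 + C^2) := by
    have h1 : ∑ i, nsq (s i) = Sa + Sb + Sc := by
      simp [nsq, Finset.sum_add_distrib, hSa_def, hSb_def, hSc_def]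
    have h2 : nsq (∑ i, s i) = A^2 + B^2 + C^2 := by
      simp [nsq, Prod.fst_sum, Prod.snd_sum, hA_def, hB_def, hC_def]
    rw [hD_def, h1, h2]
  have hsq : ∀ (x : Fin M → ℝ), (∑ i, x i)^2 ≤ (M:ℝ) * ∑ i, (x i)^2 := by
    intro x
    have := sq_sum_le_card_mul_sum_sq (s := (Finset.univ : Finset (Fin M))) (f := x)
    simpa using this
  have hD_nonneg : 0 ≤ D := by
    rw [hD_val]
    have h1 := hsq (fun i => (s i).1)
    have h2 := hsq (fun i => (s i).2.1)
    have h3 := hsq (fun i => (s i).2.2)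
    simp only [← hA_def, ← hB_def, ← hC_def, ← hSa_def, ← hSb_def, ← hSc_def] at h1 h2 h3
    nlinarith [h1, h2, h3]
  have hD_pos : 0 < D := lt_of_le_of_ne hD_nonneg (Ne.symm hden)
  set G : Fin M → Fin M → ℝ := fun i j =>
    ((s i).1 + (s j).1)^2 - 2*(((s i).2.1 - (s j).2.1)^2 + ((s i).2.2 - (s j).2.2)^2)
    with hG_def
  have hG_nonneg : ∀ i j, 0 ≤ G i j := by
    intro i j
    have := pair_bound (ha i) (ha j) (hq i) (hq j)
    simp only [hG_def]
    linarith
  set Q := ∑ i, ∑ j ∈ Finset.univ.erase i, G i j with hQ_def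
  set P := ∑ i, ∑ j ∈ Finset.univ.erase i, ((s i).1 * (s j).1) with hP_def
  clear_value Q P
  have hQ_nonneg : 0 ≤ Q := by
    rw [hQ_def]
    exact Finset.sum_nonneg fun i _ => Finset.sum_nonneg fun j _ => hG_nonneg i j
  have hP_nonneg : 0 ≤ P := by
    rw [hP_def]
    exact Finset.sum_nonneg fun i _ => Finset.sum_nonneg fun j _ => mul_nonneg (ha i) (ha j)
  have hP_val : P = A^2 - Sa := by
    have h1 : ∀ i ∈ (Finset.univ : Finset (Fin M)), ∑ j ∈ Finset.univ.erase i, ((s i).1 * (s j).1)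
        = A * (s i).1 + 0 * (s i).2.1 + 0 * (s i).2.2 + (-1) * (s i).1^2
          + 0 * (s i).2.1^2 + 0 * (s i).2.2^2 + 0 := by
      intro i _
      rw [Finset.sum_erase_eq_sub (Finset.mem_univ i), ← Finset.mul_sum, ← hA_def]
      ring
    have e := sum_expand (n := M) (fun i => (s i).1) (fun i => (s i).2.1) (fun i => (s i).2.2)
      (fun i => (s i).1^2) (fun i => (s i).2.1^2) (fun i => (s i).2.2^2)
      A 0 0 (-1) 0 0 0
    rw [hP_def, Finset.sum_congr rfl h1]
    rw [show (∑ i, (A * (s i).1 + 0 * (s i).2.1 + 0 * (s i).2.2 + (-1) * (s i).1^2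
          + 0 * (s i).2.1^2 + 0 * (s i).2.2^2 + 0)) = _ from e,
        ← hA_def, ← hSa_def]
    ring
  have hQ_val : Q = 2*A^2 + 4*B^2 + 4*C^2 + (2*(M:ℝ)-4)*Sa - 4*(M:ℝ)*Sb - 4*(M:ℝ)*Sc := by
    have hinner : ∀ i ∈ (Finset.univ : Finset (Fin M)), ∑ j ∈ Finset.univ.erase i, G i j
        = (2*A) * (s i).1 + (4*B) * (s i).2.1 + (4*C) * (s i).2.2 + ((M:ℝ) - 4) * (s i).1^2
          + (-(2*(M:ℝ))) * (s i).2.1^2 + (-(2*(M:ℝ))) * (s i).2.2^2 + (Sa - 2*Sb - 2*Sc) := by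
      intro i _
      rw [Finset.sum_erase_eq_sub (Finset.mem_univ i)]
      have hcong : ∀ j ∈ (Finset.univ : Finset (Fin M)), G i j
          = (2*(s i).1) * (s j).1 + (4*(s i).2.1) * (s j).2.1 + (4*(s i).2.2) * (s j).2.2
            + 1 * (s j).1^2 + (-2) * (s j).2.1^2 + (-2) * (s j).2.2^2
            + ((s i).1^2 - 2*(s i).2.1^2 - 2*(s i).2.2^2) := by
        intro j _
        simp only [hG_def]
        ring
      have e := sum_expand (n := M) (fun j => (s j).1) (fun j => (s j).2.1) (fun j => (s j).2.2)
        (fun j => (s j).1^2) (fun j => (s j).2.1^2) (fun j => (s j).2.2^2)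
        (2*(s i).1) (4*(s i).2.1) (4*(s i).2.2) 1 (-2) (-2)
        ((s i).1^2 - 2*(s i).2.1^2 - 2*(s i).2.2^2)
      rw [Finset.sum_congr rfl hcong,
        show (∑ j, ((2*(s i).1) * (s j).1 + (4*(s i).2.1) * (s j).2.1 + (4*(s i).2.2) * (s j).2.2
            + 1 * (s j).1^2 + (-2) * (s j).2.1^2 + (-2) * (s j).2.2^2
            + ((s i).1^2 - 2*(s i).2.1^2 - 2*(s i).2.2^2))) = _ from e,
        ← hA_def, ← hB_def, ← hC_def, ← hSa_def, ← hSb_def, ← hSc_def]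
      simp only [hG_def]
      ring
    have e2 := sum_expand (n := M) (fun i => (s i).1) (fun i => (s i).2.1) (fun i => (s i).2.2)
      (fun i => (s i).1^2) (fun i => (s i).2.1^2) (fun i => (s i).2.2^2)
      (2*A) (4*B) (4*C) ((M:ℝ) - 4) (-(2*(M:ℝ))) (-(2*(M:ℝ))) (Sa - 2*Sb - 2*Sc)
    rw [hQ_def, Finset.sum_congr rfl hinner,
      show (∑ i, ((2*A) * (s i).1 + (4*B) * (s i).2.1 + (4*C) * (s i).2.2 + ((M:ℝ) - 4) * (s i).1^2
          + (-(2*(M:ℝ))) * (s i).2.1^2 + (-(2*(M:ℝ))) * (s i).2.2^2 + (Sa - 2*Sb - 2*Sc))) = _ from e2,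
      ← hA_def, ← hB_def, ← hC_def, ← hSa_def, ← hSb_def, ← hSc_def]
    ring
  have hQP : Q / 2 + (3*(M:ℝ) - 2) * P = 3*((M:ℝ)-1)*A^2 - 2*D := by
    rw [hQ_val, hP_val, hD_val]; ring
  have h32 : (0:ℝ) < 3*(M:ℝ) - 2 := by linarith
  have hmain : 2 * D ≤ 3*((M:ℝ)-1) * A^2 := by
    nlinarith [hQ_nonneg, hP_nonneg, hQP, mul_nonneg h32.le hP_nonneg]
  constructor
  · rw [div_le_div_iff₀ h3M hD_pos]
    nlinarith [hmain]
  constructor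
  · intro heq
    rw [div_eq_div_iff hD_pos.ne' h3M.ne'] at heq
    have hzs : Q / 2 + (3*(M:ℝ)-2) * P = 0 := by nlinarith [hQP, heq]
    have h1 : (3*(M:ℝ)-2) * P = 0 := by
      have := mul_nonneg h32.le hP_nonneg
      linarith
    have hP0 : P = 0 := by
      rcases mul_eq_zero.mp h1 with h | h
      · linarith
      · exact h
    have hQ0 : Q = 0 := by linarith
    have hPz : ∀ i : Fin M, ∀ j ∈ Finset.univ.erase i, (s i).1 * (s j).1 = 0 := by
      have houter := (Finset.sum_eq_zero_iff_of_nonneg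
        (fun i _ => Finset.sum_nonneg fun j _ => mul_nonneg (ha i) (ha j))).mp
        (hP_def.symm.trans hP0)
      intro i j hj
      exact (Finset.sum_eq_zero_iff_of_nonneg
        (fun j _ => mul_nonneg (ha i) (ha j))).mp (houter i (Finset.mem_univ i)) j hj
    have hQz : ∀ i : Fin M, ∀ j ∈ Finset.univ.erase i, G i j = 0 := by
      have houter := (Finset.sum_eq_zero_iff_of_nonneg
        (fun i _ => Finset.sum_nonneg fun j _ => hG_nonneg i j)).mp
        (hQ_def.symm.trans hQ0)
      intro i j hj
      exact (Finset.sum_eq_zero_iff_of_nonneg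
        (fun j _ => hG_nonneg i j)).mp (houter i (Finset.mem_univ i)) j hj
    obtain ⟨k, hk⟩ := hnz
    have hak : (s k).1 ≠ 0 := fun h => hk (hzero k h)
    have hothers : ∀ j, j ≠ k → s j = 0 := by
      intro j hj
      have := hPz k j (Finset.mem_erase.mpr ⟨hj, Finset.mem_univ _⟩)
      rcases mul_eq_zero.mp this with h | h
      · exact absurd h hak
      · exact hzero j h
    refine ⟨k, hk, ?_, hothers⟩
    haveI : Nontrivial (Fin M) := Fin.nontrivial_iff_two_le.mpr hM
    obtain ⟨j0, hj0⟩ := exists_ne k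
    have hG0 := hQz k j0 (Finset.mem_erase.mpr ⟨hj0, Finset.mem_univ _⟩)
    have hsj0 : s j0 = 0 := hothers j0 hj0
    have hb1 : (s j0).1 = 0 := by rw [hsj0]; rfl
    have hb2 : (s j0).2.1 = 0 := by rw [hsj0]; rfl
    have hb3 : (s j0).2.2 = 0 := by rw [hsj0]; rfl
    simp only [hG_def, hb1, hb2, hb3] at hG0
    have h2 : 2 * ((s k).2.1^2 + (s k).2.2^2) = (s k).1^2 := by nlinarith [hG0]
    rw [h2, Real.sqrt_sq (ha k)]
  · rintro ⟨k, hk, hbd, hoth⟩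
    have hak : (s k).1 ≠ 0 := fun h => hk (hzero k h)
    have hak2 : (s k).1^2 = 2*((s k).2.1^2 + (s k).2.2^2) := by
      rw [hbd]; exact Real.sq_sqrt (by positivity)
    have hA_k : A = (s k).1 := by
      rw [hA_def]
      exact Finset.sum_eq_single k (fun j _ hj => by rw [hoth j hj]; rfl)
        (fun h => absurd (Finset.mem_univ k) h)
    have hD_k : D = ((M:ℝ) - 1) * nsq (s k) := by
      rw [hD_def]
      have h1 : ∑ i, nsq (s i) = nsq (s k) :=
        Finset.sum_eq_single k (fun j _ hj => by rw [hoth j hj]; simp [nsq])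
          (fun h => absurd (Finset.mem_univ k) h)
      have h2 : ∑ i, s i = s k :=
        Finset.sum_eq_single k (fun j _ hj => hoth j hj)
          (fun h => absurd (Finset.mem_univ k) h)
      rw [h1, h2]; ring
    have hnsqk : nsq (s k) = 3/2 * (s k).1^2 := by
      simp only [nsq]; linarith [hak2]
    rw [hA_k, hD_k, hnsqk]
    have hM1 : (M:ℝ) - 1 ≠ 0 := by linarith
    have hsk2 : (s k).1^2 ≠ 0 := pow_ne_zero 2 hak
    field_simp
end

section
/- For the constellation O_M ⊂ ℝ³ consisting of M−1 points at the origin and one point (√((2/3)·M·E_s), 0, √(M·E_s/3)) on the boundary of the cone Υ, the ratio (Σᵢ s_{i,1})² / (M·Σᵢ ‖sᵢ‖² − ‖Σᵢ sᵢ‖²) equals exactly 2/(3(M−1)), attaining the lower bound for average optical power zero-crossing over all M-point constellations in Υ. -/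
theorem OM_attains_optical_bound (M : ℕ) (hM : 2 ≤ M) (Es : ℝ) (hEs : 0 < Es)
    (s : Fin M → ℝ × ℝ × ℝ)
    (hdef : ∀ i : Fin M,
      s i = if (i : ℕ) = 0 then
        ((Real.sqrt ((2 / 3) * (M : ℝ) * Es), 0,
          Real.sqrt ((M : ℝ) * Es / 3)) : ℝ × ℝ × ℝ) else 0) :
    (∑ i, (s i).1) ^ 2 / ((M : ℝ) * (∑ i, nsq (s i)) - nsq (∑ i, s i)) =
      2 / (3 * ((M : ℝ) - 1)) ∧
    (∀ t : Fin M → ℝ × ℝ × ℝ, (∀ i, t i ∈ cone) →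
      (M : ℝ) * (∑ i, nsq (t i)) - nsq (∑ i, t i) ≠ 0 →
      2 / (3 * ((M : ℝ) - 1)) ≤
        (∑ i, (t i).1) ^ 2 / ((M : ℝ) * (∑ i, nsq (t i)) - nsq (∑ i, t i))) := by
  haveI : NeZero M := ⟨by omega⟩
  have hMR : (2:ℝ) ≤ (M:ℝ) := by exact_mod_cast hM
  constructor
  · -- the explicit computation for the constellation O_M
    set p : ℝ × ℝ × ℝ :=
      (Real.sqrt ((2 / 3) * (M : ℝ) * Es), 0, Real.sqrt ((M : ℝ) * Es / 3)) with hp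
    have hv : ∀ i : Fin M, (i : ℕ) = 0 ↔ i = 0 := fun i => by
      rw [Fin.ext_iff, Fin.val_zero]
    have hs : s = fun i : Fin M => if i = 0 then p else 0 := by
      funext i; rw [hdef i]
      by_cases h : (i : ℕ) = 0 <;> simp [h, (hv i).symm, hv]
    have h1 : (∑ i, (s i).1) = p.1 := by
      simp [hs, apply_ite Prod.fst]
    have h2 : (∑ i, nsq (s i)) = nsq p := by
      have hz : nsq 0 = 0 := by simp [nsq]
      simp [hs, apply_ite nsq, hz]
    have h3 : (∑ i, s i) = p := by
      simp [hs]
    have hpa : p.1 ^ 2 = (2 / 3) * (M : ℝ) * Es := by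
      rw [hp]; exact Real.sq_sqrt (by positivity)
    have hpn : nsq p = (M : ℝ) * Es := by
      have h1 : Real.sqrt ((2 / 3) * (M : ℝ) * Es) ^ 2 = (2 / 3) * (M : ℝ) * Es :=
        Real.sq_sqrt (by positivity)
      have h2 : Real.sqrt ((M : ℝ) * Es / 3) ^ 2 = (M : ℝ) * Es / 3 :=
        Real.sq_sqrt (by positivity)
      simp only [nsq, hp, h1, h2]
      ring
    rw [h1, h2, h3, hpa, hpn, div_eq_div_iff (by nlinarith) (by nlinarith)]
    ring
  · -- the lower bound for all constellations in the cone
    intro t hcone hne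
    set a : Fin M → ℝ := fun i => (t i).1 with ha
    set b : Fin M → ℝ := fun i => (t i).2.1 with hb
    set c : Fin M → ℝ := fun i => (t i).2.2 with hc
    have hcone' : ∀ i, 0 ≤ a i ∧ 2 * (b i ^ 2 + c i ^ 2) ≤ a i ^ 2 := by
      intro i
      have h := hcone i
      simp only [cone, Set.mem_setOf_eq] at h
      have h0 : 0 ≤ a i := le_trans (Real.sqrt_nonneg _) h
      refine ⟨h0, ?_⟩
      have h2 : Real.sqrt (2 * (b i ^ 2 + c i ^ 2)) ^ 2 ≤ a i ^ 2 :=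
        pow_le_pow_left₀ (Real.sqrt_nonneg _) h 2
      rwa [Real.sq_sqrt (by positivity)] at h2
    set S := ∑ i, a i with hS
    set Q := ∑ i, a i ^ 2 with hQ
    set N := ∑ i, nsq (t i) with hN
    -- componentwise sum
    have hsum : (∑ i, t i) = (S, ∑ i, b i, ∑ i, c i) := by
      refine Prod.ext ?_ (Prod.ext ?_ ?_) <;>
        simp [Prod.fst_sum, Prod.snd_sum, hS, ha, hb, hc]
    -- expand nsq of the sum as a double sum
    have expand : nsq (∑ i, t i) = ∑ i, ∑ j, (a i * a j + (b i * b j + c i * c j)) := by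
      rw [hsum]
      simp only [nsq, sq]
      rw [Finset.sum_mul_sum, Finset.sum_mul_sum, Finset.sum_mul_sum]
      rw [← Finset.sum_add_distrib, ← Finset.sum_add_distrib]
      refine Finset.sum_congr rfl fun i _ => ?_
      rw [← Finset.sum_add_distrib, ← Finset.sum_add_distrib]
      exact Finset.sum_congr rfl fun j _ => by ring
    -- pointwise lower bound on the "inner products"
    have hij : ∀ i j : Fin M,
        a i * a j / 2 + (if i = j then b i ^ 2 + c i ^ 2 + a i ^ 2 / 2 else 0) ≤
          a i * a j + (b i * b j + c i * c j) := by
      intro i j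
      by_cases h : i = j
      · subst h; simp; nlinarith [(hcone' i).1]
      · simp only [h, if_false, add_zero]
        obtain ⟨hai, hbi⟩ := hcone' i
        obtain ⟨haj, hbj⟩ := hcone' j
        nlinarith [sq_nonneg (b i * c j - c i * b j), sq_nonneg (b i * b j + c i * c j),
          mul_le_mul hbi hbj (by positivity) (sq_nonneg (a i)),
          mul_nonneg hai haj, sq_nonneg (a i * a j + 2 * (b i * b j + c i * c j))]
    -- the key bound on nsq of the sum
    have key : S ^ 2 / 2 + N - Q / 2 ≤ nsq (∑ i, t i) := by
      rw [expand]
      have h1 : (∑ i, ∑ j,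
          (a i * a j / 2 + (if i = j then b i ^ 2 + c i ^ 2 + a i ^ 2 / 2 else 0))) ≤
          ∑ i, ∑ j, (a i * a j + (b i * b j + c i * c j)) :=
        Finset.sum_le_sum fun i _ => Finset.sum_le_sum fun j _ => hij i j
      refine le_trans (le_of_eq ?_) h1
      have h2 : ∀ i : Fin M, (∑ j,
          (a i * a j / 2 + (if i = j then b i ^ 2 + c i ^ 2 + a i ^ 2 / 2 else 0))) =
          a i * S / 2 + (b i ^ 2 + c i ^ 2 + a i ^ 2 / 2) := by
        intro i
        rw [Finset.sum_add_distrib]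
        congr 1
        · rw [← Finset.sum_div, ← Finset.mul_sum]
        · simp
      rw [Finset.sum_congr rfl fun i _ => h2 i, Finset.sum_add_distrib]
      have h3 : (∑ i, a i * S / 2) = S ^ 2 / 2 := by
        rw [← Finset.sum_div, ← Finset.sum_mul, sq]
      have h4 : (∑ i, (b i ^ 2 + c i ^ 2 + a i ^ 2 / 2)) = N - Q / 2 := by
        rw [hN, hQ, Finset.sum_div, ← Finset.sum_sub_distrib]
        refine Finset.sum_congr rfl fun i _ => ?_
        simp only [nsq, ha, hb, hc]
        ring
      rw [h3, h4]
      ring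
    have hQS : Q ≤ S ^ 2 := Finset.sum_sq_le_sq_sum_of_nonneg fun i _ => (hcone' i).1
    have hNQ : N ≤ 3 / 2 * Q := by
      rw [hN, hQ, Finset.mul_sum]
      refine Finset.sum_le_sum fun i _ => ?_
      have := (hcone' i).2
      simp only [nsq, ha, hb, hc] at *
      nlinarith
    -- the denominator is nonnegative
    have hD0 : 0 ≤ (M : ℝ) * N - nsq (∑ i, t i) := by
      rw [hsum]
      simp only [nsq]
      have h1 : S ^ 2 ≤ (M : ℝ) * ∑ i, a i ^ 2 := by
        have := sq_sum_le_card_mul_sum_sq (s := (Finset.univ : Finset (Fin M))) (f := a)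
        simpa [hS] using this
      have h2 : (∑ i, b i) ^ 2 ≤ (M : ℝ) * ∑ i, b i ^ 2 := by
        have := sq_sum_le_card_mul_sum_sq (s := (Finset.univ : Finset (Fin M))) (f := b)
        simpa using this
      have h3 : (∑ i, c i) ^ 2 ≤ (M : ℝ) * ∑ i, c i ^ 2 := by
        have := sq_sum_le_card_mul_sum_sq (s := (Finset.univ : Finset (Fin M))) (f := c)
        simpa using this
      have h4 : N = (∑ i, a i ^ 2) + (∑ i, b i ^ 2) + (∑ i, c i ^ 2) := by
        rw [hN, ← Finset.sum_add_distrib, ← Finset.sum_add_distrib]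
        exact Finset.sum_congr rfl fun i _ => rfl
      rw [h4]
      have := hsum
      nlinarith
    have hD : 0 < (M : ℝ) * N - nsq (∑ i, t i) := lt_of_le_of_ne hD0 (Ne.symm hne)
    have hfin : 2 * ((M : ℝ) * N - nsq (∑ i, t i)) ≤ S ^ 2 * (3 * ((M : ℝ) - 1)) := by
      nlinarith [key, hQS, hNQ, mul_le_mul_of_nonneg_left hNQ (by linarith : (0:ℝ) ≤ (M:ℝ) - 1)]
    rw [div_le_div_iff₀ (by linarith : (0:ℝ) < 3 * ((M:ℝ) - 1)) hD]
    linarith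
end

section
/- Let s be a nonzero point of Υ and consider the M-point constellation with M−1 points at the origin and one point s. Then the expression (Σᵢ s_{i,1})²/(M Σᵢ ‖sᵢ‖² − ‖Σᵢ sᵢ‖²) equals s1²/((M−1)‖s‖²), and this is minimized over s ∈ Υ \ {0} exactly when s is on the boundary of Υ, where it equals 2/(3(M−1)). -/
theorem single_nonzero_point_optical_ratio (M : ℕ) (hM : 2 ≤ M)
    (s : ℝ × ℝ × ℝ) (hs : s ∈ cone) (hne : s ≠ 0)
    (f : Fin M → ℝ × ℝ × ℝ)
    (hdef : ∀ i : Fin M, f i = if (i : ℕ) = 0 then s else 0) :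
    (∑ i, (f i).1) ^ 2 / ((M : ℝ) * (∑ i, nsq (f i)) - nsq (∑ i, f i)) =
      s.1 ^ 2 / (((M : ℝ) - 1) * nsq s) ∧
    2 / (3 * ((M : ℝ) - 1)) ≤ s.1 ^ 2 / (((M : ℝ) - 1) * nsq s) ∧
    (s.1 ^ 2 / (((M : ℝ) - 1) * nsq s) = 2 / (3 * ((M : ℝ) - 1)) ↔
      s.1 = Real.sqrt (2 * (s.2.1 ^ 2 + s.2.2 ^ 2))) := by
  have hMR : (2 : ℝ) ≤ (M : ℝ) := by exact_mod_cast hM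
  have hsub : Real.sqrt (2 * (s.2.1 ^ 2 + s.2.2 ^ 2)) ≤ s.1 := hs
  have hnn : 0 ≤ s.1 := le_trans (Real.sqrt_nonneg _) hsub
  have hsq : 2 * (s.2.1 ^ 2 + s.2.2 ^ 2) ≤ s.1 ^ 2 := by
    have h := mul_self_le_mul_self (Real.sqrt_nonneg _) hsub
    rw [Real.mul_self_sqrt (by positivity)] at h
    nlinarith
  have hpos : 0 < s.1 := by
    rcases hnn.lt_or_eq with h | h
    · exact h
    · exfalso
      apply hne
      have h1 : s.2.1 = 0 := by nlinarith
      have h2 : s.2.2 = 0 := by nlinarith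
      have : s = (s.1, s.2.1, s.2.2) := rfl
      rw [this, ← h, h1, h2]; rfl
  have hnsq : 0 < nsq s := by unfold nsq; positivity
  have hM1 : 0 < (M : ℝ) - 1 := by linarith
  have key : ∀ {β : Type} [AddCommMonoid β] (g : (ℝ × ℝ × ℝ) → β), g 0 = 0 →
      ∑ i, g (f i) = g s := by
    intro β _ g hg0
    rw [Finset.sum_eq_single (⟨0, by omega⟩ : Fin M)]
    · rw [hdef]; simp
    · intro i _ hi
      rw [hdef]
      have : (i : ℕ) ≠ 0 := by
        intro h; apply hi; exact Fin.ext h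
      simp [this, hg0]
    · intro h; simp at h
  have h1 : ∑ i, (f i).1 = s.1 := key Prod.fst rfl
  have h2 : ∑ i, nsq (f i) = nsq s := key nsq (by unfold nsq; norm_num)
  have h3 : ∑ i, f i = s := key id rfl
  have hden : (M : ℝ) * nsq s - nsq s = ((M : ℝ) - 1) * nsq s := by ring
  refine ⟨by rw [h1, h2, h3, hden], ?_, ?_⟩
  · rw [div_le_div_iff₀ (by positivity) (by positivity)]
    have : 2 * nsq s ≤ 3 * s.1 ^ 2 := by unfold nsq; nlinarith
    nlinarith
  · constructor
    · intro h
      rw [div_eq_div_iff (by positivity) (by positivity)] at h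
      have he : s.1 ^ 2 = 2 * (s.2.1 ^ 2 + s.2.2 ^ 2) := by
        unfold nsq at h; nlinarith
      rw [← he, Real.sqrt_sq hnn]
    · intro h
      have he : s.1 ^ 2 = 2 * (s.2.1 ^ 2 + s.2.2 ^ 2) := by
        rw [h, Real.sq_sqrt (by positivity)]
      rw [div_eq_div_iff (by positivity) (by positivity)]
      unfold nsq; nlinarith
end
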